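/- Let T be a positive integer and Σ₀ ∈ ℝ^{T×T} a symmetric positive definite matrix with eigenvalues λ_1, ..., λ_T (listed with multiplicity). Define G² = (𝟏ᵀ Σ₀⁻¹ 𝟏)(𝟏ᵀ Σ₀ 𝟏) / T². Then there exist nonnegative weights {w_{ij}}_{i,j=1}^{T} such that G² = 1 + Σ_{i,j=1}^{T} w_{ij} (λ_i - λ_j)². Explicitly, if Σ₀ = Uᵀ A U with U orthogonal, A diagonal with A_{ii} = λ_i, and u = U𝟏, then one may take w_{ij} = (u_i u_j)² / (2 T² λ_i λ_j). -/

import Mathlib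

open Matrix

private lemma key_sum_identity (n : ℕ) (lam u : Fin n → ℝ) (hlam : ∀ i, 0 < lam i) :
    (∑ i, u i ^ 2 / lam i) * (∑ j, lam j * u j ^ 2)
      = (∑ i, u i ^ 2) ^ 2
        + ∑ i, ∑ j, (u i * u j) ^ 2 * (lam i - lam j) ^ 2 / (2 * lam i * lam j) := by
  have hL : (∑ i, u i ^ 2 / lam i) * (∑ j, lam j * u j ^ 2)
      = ∑ i, ∑ j, (u i ^ 2 / lam i) * (lam j * u j ^ 2) := by
    rw [Finset.sum_mul_sum]
  have hsq : (∑ i, u i ^ 2) ^ 2 = ∑ i, ∑ j, u i ^ 2 * u j ^ 2 := by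
    rw [sq, Finset.sum_mul_sum]
  rw [hL, hsq, ← Finset.sum_add_distrib]
  have hswap : ∑ i, ∑ j, (u i ^ 2 / lam i) * (lam j * u j ^ 2)
      = ∑ i, ∑ j, (u j ^ 2 / lam j) * (lam i * u i ^ 2) := Finset.sum_comm
  have h2 : (2 : ℝ) * ∑ i, ∑ j, (u i ^ 2 / lam i) * (lam j * u j ^ 2)
      = 2 * ∑ i, ∑ j,
        (u i ^ 2 * u j ^ 2 + (u i * u j) ^ 2 * (lam i - lam j) ^ 2 / (2 * lam i * lam j)) := by
    rw [two_mul]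
    nth_rewrite 2 [hswap]
    rw [← Finset.sum_add_distrib, two_mul, ← Finset.sum_add_distrib]
    refine Finset.sum_congr rfl fun i _ => ?_
    rw [← Finset.sum_add_distrib, ← Finset.sum_add_distrib]
    refine Finset.sum_congr rfl fun j _ => ?_
    have hi := (hlam i).ne'
    have hj := (hlam j).ne'
    field_simp
    ring
  have := mul_left_cancel₀ (two_ne_zero (α := ℝ)) h2
  rw [this]
  simp [Finset.sum_add_distrib]

/-- the asymptotic power gain `G² = (𝟏ᵀΣ₀⁻¹𝟏)(𝟏ᵀΣ₀𝟏)/T²` satisfies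
`G² = 1 + ∑_{i,j} w_{ij}(λ_i - λ_j)²` for nonnegative weights `w_{ij}`, where `λ_i` are the
eigenvalues of `Σ₀` (listed with multiplicity via an orthogonal diagonalization
`Σ₀ = Uᵀ A U`), and explicitly `w_{ij} = (u_i u_j)²/(2T²λ_iλ_j)` with `u = U𝟏`. -/
theorem asymptotic_power_gain_eigenvalue_formula
    (T : ℕ) (hT : 0 < T) (S₀ : Matrix (Fin T) (Fin T) ℝ) (hS₀ : S₀.PosDef)
    (lam : Fin T → ℝ) (U : Matrix (Fin T) (Fin T) ℝ)
    (hU : Uᵀ * U = 1) (hdecomp : S₀ = Uᵀ * Matrix.diagonal lam * U) :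
    let one : Fin T → ℝ := fun _ => 1
    let G2 : ℝ := ((one ⬝ᵥ S₀⁻¹ *ᵥ one) * (one ⬝ᵥ S₀ *ᵥ one)) / (T : ℝ) ^ 2
    let u : Fin T → ℝ := U *ᵥ one
    let w : Fin T → Fin T → ℝ := fun i j => (u i * u j) ^ 2 / (2 * (T : ℝ) ^ 2 * lam i * lam j)
    (∀ i j, 0 ≤ w i j) ∧ G2 = 1 + ∑ i, ∑ j, w i j * (lam i - lam j) ^ 2 := by
  intro one G2 u w
  have hUU : U * Uᵀ = 1 := mul_eq_one_comm.mp hU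
  -- eigenvalues are positive
  have hlam : ∀ i, 0 < lam i := by
    intro i
    set e : Fin T → ℝ := Pi.single i 1 with he
    set x : Fin T → ℝ := Uᵀ *ᵥ e with hx
    have hUx : U *ᵥ x = e := by
      rw [hx, Matrix.mulVec_mulVec, hUU, Matrix.one_mulVec]
    have hxne : x ≠ 0 := by
      intro h
      have : e = 0 := by rw [← hUx, h, Matrix.mulVec_zero]
      have := congrFun this i
      simp [he] at this
    have hpos := hS₀.dotProduct_mulVec_pos hxne
    have hval : star x ⬝ᵥ S₀ *ᵥ x = lam i := by
      have hsx : star x = x := by simp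
      rw [hsx, hdecomp, ← Matrix.mulVec_mulVec, ← Matrix.mulVec_mulVec,
        Matrix.dotProduct_mulVec, Matrix.vecMul_transpose, hUx]
      simp [Matrix.mulVec_diagonal, dotProduct, he, Pi.single_apply]
    rwa [hval] at hpos
  have hlamne : ∀ i, lam i ≠ 0 := fun i => (hlam i).ne'
  -- inverse formula
  have hinv : S₀⁻¹ = Uᵀ * Matrix.diagonal (fun i => (lam i)⁻¹) * U := by
    apply Matrix.inv_eq_right_inv
    rw [hdecomp]
    calc Uᵀ * Matrix.diagonal lam * U * (Uᵀ * Matrix.diagonal (fun i => (lam i)⁻¹) * U)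
        = Uᵀ * (Matrix.diagonal lam * (U * Uᵀ) * Matrix.diagonal (fun i => (lam i)⁻¹)) * U := by
          noncomm_ring
      _ = Uᵀ * (Matrix.diagonal lam * Matrix.diagonal (fun i => (lam i)⁻¹)) * U := by
          rw [hUU]; simp
      _ = Uᵀ * U := by
          have hfun : (fun i => lam i * (lam i)⁻¹) = fun _ : Fin T => (1 : ℝ) :=
            funext fun i => mul_inv_cancel₀ (hlamne i)
          have hd : Matrix.diagonal (fun i => lam i * (lam i)⁻¹) = (1 : Matrix (Fin T) (Fin T) ℝ) := by
            rw [hfun]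
            simp [← Matrix.diagonal_one]
          rw [Matrix.diagonal_mul_diagonal, hd, mul_one]
      _ = 1 := hU
  -- quadratic forms
  have hquad : ∀ d : Fin T → ℝ,
      one ⬝ᵥ (Uᵀ * Matrix.diagonal d * U) *ᵥ one = ∑ i, d i * u i ^ 2 := by
    intro d
    rw [← Matrix.mulVec_mulVec, ← Matrix.mulVec_mulVec, Matrix.dotProduct_mulVec,
      Matrix.vecMul_transpose]
    show u ⬝ᵥ (Matrix.diagonal d *ᵥ u) = _
    simp [dotProduct, Matrix.mulVec_diagonal]
    exact Finset.sum_congr rfl fun i _ => by ring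
  have hS : one ⬝ᵥ S₀ *ᵥ one = ∑ i, lam i * u i ^ 2 := by rw [hdecomp]; exact hquad lam
  have hSi : one ⬝ᵥ S₀⁻¹ *ᵥ one = ∑ i, u i ^ 2 / lam i := by
    rw [hinv, hquad]
    exact Finset.sum_congr rfl fun i _ => by rw [div_eq_inv_mul]
  -- sum of u i ^ 2 = T
  have hsum : ∑ i, u i ^ 2 = (T : ℝ) := by
    have : ∑ i, u i ^ 2 = one ⬝ᵥ (Uᵀ * U) *ᵥ one := by
      rw [← Matrix.mulVec_mulVec, Matrix.dotProduct_mulVec, Matrix.vecMul_transpose]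
      show _ = u ⬝ᵥ u
      simp [dotProduct, sq]
    rw [this, hU]
    simp [dotProduct, one]
  have hT' : (T : ℝ) ≠ 0 := Nat.cast_ne_zero.mpr hT.ne'
  constructor
  · intro i j
    have := hlam i
    have := hlam j
    positivity
  · show ((one ⬝ᵥ S₀⁻¹ *ᵥ one) * (one ⬝ᵥ S₀ *ᵥ one)) / (T : ℝ) ^ 2 = _
    rw [hS, hSi, key_sum_identity T lam u hlam, hsum]
    rw [add_div]
    congr 1
    · field_simp
    · rw [Finset.sum_div]
      refine Finset.sum_congr rfl fun i _ => ?_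
      rw [Finset.sum_div]
      refine Finset.sum_congr rfl fun j _ => ?_
      show _ = (u i * u j) ^ 2 / (2 * (T : ℝ) ^ 2 * lam i * lam j) * (lam i - lam j) ^ 2
      have hi := hlamne i
      have hj := hlamne j
      rw [div_div, div_mul_eq_mul_div]
      ring_nf
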